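/- arXiv:0708.1054 — 2 statements merged into one kernel-verified Lean document; each statement's English description precedes it below -/
import Mathlib

section
/- If the coefficients satisfy a_0 \le a_1 \le \dots \le a_n, then the Bernstein polynomial F_a(t) = \sum_{i=0}^n a_i \binom{n}{i} t^i (1-t)^{n-i} is monotone nondecreasing on [0,1]. -/
open Finset Set

private lemma bern_deriv (n : ℕ) (a : ℕ → ℝ) (t : ℝ) :
    HasDerivAt (fun t : ℝ => ∑ i ∈ Finset.range (n+1),
        a i * (n.choose i : ℝ) * t ^ i * (1 - t) ^ (n - i))
      (∑ i ∈ Finset.range (n+1),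
        a i * (n.choose i : ℝ) * ((i : ℝ) * t ^ (i-1) * (1 - t) ^ (n - i)
          - ((n - i : ℕ) : ℝ) * t ^ i * (1 - t) ^ (n - i - 1))) t := by
  apply HasDerivAt.fun_sum
  intro i _
  have h1 : HasDerivAt (fun t : ℝ => t ^ i) ((i : ℝ) * t ^ (i - 1)) t :=
    hasDerivAt_pow i t
  have h2 : HasDerivAt (fun t : ℝ => (1 - t) ^ (n - i))
      (-(((n - i : ℕ) : ℝ) * (1 - t) ^ (n - i - 1))) t := by
    have := (hasDerivAt_pow (n - i) (1 - t)).comp t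
      ((hasDerivAt_const t (1:ℝ)).sub (hasDerivAt_id t))
    simpa [Function.comp_def] using this
  have := ((h1.fun_mul h2).const_mul (a i * (n.choose i : ℝ)))
  convert this using 1
  · ext s; ring
  · ring
  · ring

private lemma key_nat (n j : ℕ) (hj : j < n) :
    ((n.choose (j+1) * (j+1) : ℕ) : ℝ) = (n : ℝ) * ((n-1).choose j : ℝ) ∧
    ((n.choose j * (n - j) : ℕ) : ℝ) = (n : ℝ) * ((n-1).choose j : ℝ) := by
  have h1 : n.choose (j+1) * (j+1) = n.choose j * (n - j) :=
    Nat.choose_succ_right_eq n j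
  have hn : n - 1 + 1 = n := by omega
  have h2 : n * (n-1).choose j = n.choose (j+1) * (j+1) := by
    have := Nat.add_one_mul_choose_eq (n-1) j
    simpa [hn] using this
  constructor
  · push_cast [← h2]; ring
  · push_cast [← h1, ← h2]; ring

private lemma sum_identity (n : ℕ) (a : ℕ → ℝ) (t : ℝ) :
    (∑ i ∈ Finset.range (n+1),
        a i * (n.choose i : ℝ) * ((i : ℝ) * t ^ (i-1) * (1 - t) ^ (n - i)
          - ((n - i : ℕ) : ℝ) * t ^ i * (1 - t) ^ (n - i - 1)))
    = (n : ℝ) * ∑ j ∈ Finset.range n,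
        (a (j+1) - a j) * ((n-1).choose j : ℝ) * t ^ j * (1 - t) ^ (n - 1 - j) := by
  rw [Finset.mul_sum]
  simp only [mul_sub]
  rw [Finset.sum_sub_distrib]
  rw [Finset.sum_range_succ'
    (fun i => a i * (n.choose i : ℝ) * ((i : ℝ) * t ^ (i-1) * (1 - t) ^ (n - i)))]
  rw [Finset.sum_range_succ
    (fun i => a i * (n.choose i : ℝ) * (((n - i : ℕ) : ℝ) * t ^ i * (1 - t) ^ (n - i - 1)))]
  simp only [Nat.sub_self, Nat.cast_zero, Nat.cast_ofNat, zero_mul, mul_zero, add_zero,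
    sub_zero]
  rw [← Finset.sum_sub_distrib]
  apply Finset.sum_congr rfl
  intro j hj
  have hj' := Finset.mem_range.mp hj
  obtain ⟨k1, k2⟩ := key_nat n j hj'
  have hk1 : ((n.choose (j+1) : ℝ)) * ((j:ℝ)+1) = (n : ℝ) * ((n-1).choose j : ℝ) := by
    push_cast at k1; linarith [k1]
  have hk2 : ((n.choose j : ℝ)) * ((n:ℝ) - (j:ℝ)) = (n : ℝ) * ((n-1).choose j : ℝ) := by
    rw [Nat.cast_mul, Nat.cast_sub hj'.le] at k2; exact k2
  have e1 : n - (j+1) = n - 1 - j := by omega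
  have e2 : j + 1 - 1 = j := rfl
  have e3 : n - j - 1 = n - 1 - j := by omega
  have e4 : (((n - j : ℕ)) : ℝ) = (n:ℝ) - (j:ℝ) := Nat.cast_sub hj'.le
  simp only [e1, e2, e3, e4]
  push_cast
  linear_combination (t ^ j * (1 - t) ^ (n - 1 - j)) * (a (j+1) * hk1 - a j * hk2)

/-- If `a_0 ≤ a_1 ≤ ⋯ ≤ a_n`, then the Bernstein polynomial `F_a` is monotone
nondecreasing on `[0,1]`. -/
theorem bernstein_monotoneOn (n : ℕ) (a : ℕ → ℝ)
    (ha : ∀ i, i < n → a i ≤ a (i+1)) :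
    MonotoneOn (fun t : ℝ => ∑ i ∈ Finset.range (n+1),
        a i * (n.choose i : ℝ) * t ^ i * (1 - t) ^ (n - i)) (Icc (0:ℝ) 1) := by
  have hd : ∀ t : ℝ, HasDerivAt (fun t : ℝ => ∑ i ∈ Finset.range (n+1),
      a i * (n.choose i : ℝ) * t ^ i * (1 - t) ^ (n - i))
      ((n : ℝ) * ∑ j ∈ Finset.range n,
        (a (j+1) - a j) * ((n-1).choose j : ℝ) * t ^ j * (1 - t) ^ (n - 1 - j)) t := by
    intro t
    have := bern_deriv n a t
    rwa [sum_identity n a t] at this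
  apply monotoneOn_of_deriv_nonneg (convex_Icc (0:ℝ) 1)
  · apply Continuous.continuousOn
    fun_prop
  · intro x _
    exact (hd x).differentiableAt.differentiableWithinAt
  · intro x hx
    rw [(hd x).deriv]
    rw [interior_Icc] at hx
    apply mul_nonneg (Nat.cast_nonneg n)
    apply Finset.sum_nonneg
    intro j hj
    have h1 : (0:ℝ) ≤ a (j+1) - a j := by
      have := ha j (Finset.mem_range.mp hj); linarith
    have h2 : (0:ℝ) ≤ x ^ j := pow_nonneg hx.1.le j
    have h3 : (0:ℝ) ≤ (1 - x) ^ (n - 1 - j) := pow_nonneg (by linarith [hx.2]) _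
    positivity
end

section
/- If the coefficient sequence (a_i) is concave in the sense that a_{i+1} + a_{i-1} \le 2 a_i for all i = 1, ..., n-1, then the Bernstein polynomial F_a(t) = \sum_{i=0}^n a_i \binom{n}{i} t^i (1-t)^{n-i} is a concave function on [0,1]. -/
open Finset Set


lemma bern_hasDerivAt (m : ℕ) (b : ℕ → ℝ) (t : ℝ) :
    HasDerivAt (fun t : ℝ => ∑ i ∈ Finset.range (m+2),
        b i * ((m+1).choose i : ℝ) * t ^ i * (1 - t) ^ (m+1-i))
      (((m:ℝ)+1) * ∑ i ∈ Finset.range (m+1),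
        (b (i+1) - b i) * (m.choose i : ℝ) * t ^ i * (1 - t) ^ (m-i)) t := by
  have key : ∀ i ∈ Finset.range (m+2),
      HasDerivAt (fun t : ℝ => b i * ((m+1).choose i : ℝ) * t ^ i * (1 - t) ^ (m+1-i))
        (b i * ((m+1).choose i : ℝ) * (i:ℝ) * t ^ (i-1) * (1-t)^(m+1-i)
          - b i * ((m+1).choose i : ℝ) * ((m+1-i : ℕ):ℝ) * t ^ i * (1-t)^(m+1-i-1)) t := by
    intro i _
    have h1 : HasDerivAt (fun t : ℝ => b i * ((m+1).choose i : ℝ) * t ^ i)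
        (b i * ((m+1).choose i : ℝ) * ((i:ℝ) * t^(i-1))) t :=
      (hasDerivAt_pow i t).const_mul _
    have h2 : HasDerivAt (fun t : ℝ => (1-t) ^ (m+1-i))
        (-(((m+1-i:ℕ):ℝ) * (1-t)^(m+1-i-1))) t := by
      have := (hasDerivAt_pow (m+1-i) (1-t)).comp t
        ((hasDerivAt_const t (1:ℝ)).sub (hasDerivAt_id t))
      simpa [Function.comp_def] using this
    have := h1.mul h2
    refine this.congr_deriv ?_
    ring
  have hsum := HasDerivAt.fun_sum key
  refine hsum.congr_deriv ?_
  rw [Finset.sum_sub_distrib]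
  have hA : ∑ i ∈ Finset.range (m+2),
      b i * ((m+1).choose i : ℝ) * (i:ℝ) * t ^ (i-1) * (1-t)^(m+1-i)
      = ((m:ℝ)+1) * ∑ i ∈ Finset.range (m+1),
        b (i+1) * (m.choose i : ℝ) * t ^ i * (1 - t) ^ (m-i) := by
    rw [Finset.sum_range_succ', Finset.mul_sum]
    simp only [Nat.cast_zero, mul_zero, zero_mul, add_zero, Nat.add_sub_cancel]
    refine Finset.sum_congr rfl fun i _ => ?_
    have h : ((m+1).choose (i+1) : ℝ) * ((i:ℝ)+1) = ((m:ℝ)+1) * (m.choose i : ℝ) := by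
      have := Nat.add_one_mul_choose_eq m i
      have : ((m+1) * m.choose i : ℕ) = ((m+1).choose (i+1) * (i+1) : ℕ) := this
      exact_mod_cast this.symm
    push_cast
    linear_combination (b (i + 1) * t ^ i * (1 - t) ^ (m - i)) * h
  have hB : ∑ i ∈ Finset.range (m+2),
      b i * ((m+1).choose i : ℝ) * ((m+1-i : ℕ):ℝ) * t ^ i * (1-t)^(m+1-i-1)
      = ((m:ℝ)+1) * ∑ i ∈ Finset.range (m+1),
        b i * (m.choose i : ℝ) * t ^ i * (1 - t) ^ (m-i) := by
    rw [Finset.sum_range_succ, Finset.mul_sum]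
    simp only [Nat.sub_self, Nat.cast_zero, mul_zero, zero_mul, add_zero]
    refine Finset.sum_congr rfl fun i hi => ?_
    have hi' : i ≤ m := Nat.lt_succ_iff.mp (Finset.mem_range.mp hi)
    have h : ((m+1).choose i : ℝ) * ((m+1-i : ℕ):ℝ) = ((m:ℝ)+1) * (m.choose i : ℝ) := by
      have h2 : (m+1).choose i * (m+1-i) = (m+1) * m.choose i := by
        simpa [mul_comm] using (Nat.choose_mul_succ_eq m i).symm
      exact_mod_cast h2
    have he : m + 1 - i - 1 = m - i := by omega
    rw [he]
    linear_combination (b i * t ^ i * (1 - t) ^ (m - i)) * h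
  rw [hA, hB, ← mul_sub, ← Finset.sum_sub_distrib]
  exact congrArg _ (Finset.sum_congr rfl fun i _ => by ring)

/-- If the coefficient sequence is concave (`a_{i+1} + a_{i-1} ≤ 2 a i`), then the
Bernstein polynomial `F_a` is concave on `[0,1]`. -/
theorem bernstein_concaveOn (n : ℕ) (hn : 2 ≤ n) (a : ℕ → ℝ)
    (hcc : ∀ i, 1 ≤ i → i ≤ n - 1 → a (i+1) + a (i-1) ≤ 2 * a i) :
    ConcaveOn ℝ (Icc (0:ℝ) 1) (fun t : ℝ => ∑ i ∈ Finset.range (n+1),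
        a i * (n.choose i : ℝ) * t ^ i * (1 - t) ^ (n - i)) := by
  obtain ⟨m, rfl⟩ : ∃ m, n = m + 2 := ⟨n - 2, by omega⟩
  set f : ℝ → ℝ := fun t : ℝ => ∑ i ∈ Finset.range (m+2+1),
      a i * ((m+2).choose i : ℝ) * t ^ i * (1 - t) ^ (m+2-i) with hf
  set f' : ℝ → ℝ := fun t : ℝ => (((m+1:ℕ):ℝ)+1) * ∑ i ∈ Finset.range (m+2),
      (a (i+1) - a i) * ((m+1).choose i : ℝ) * t ^ i * (1 - t) ^ (m+1-i) with hf'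
  set f'' : ℝ → ℝ := fun t : ℝ => (((m+1:ℕ):ℝ)+1) * (((m:ℝ)+1) * ∑ i ∈ Finset.range (m+1),
      ((a (i+2) - a (i+1)) - (a (i+1) - a i)) * (m.choose i : ℝ) * t ^ i * (1 - t) ^ (m-i))
      with hf''
  have hd1 : ∀ t : ℝ, HasDerivAt f (f' t) t := fun t => bern_hasDerivAt (m+1) a t
  have hd2 : ∀ t : ℝ, HasDerivAt f' (f'' t) t := fun t =>
    (bern_hasDerivAt m (fun i => a (i+1) - a i) t).const_mul _
  refine concaveOn_of_hasDerivWithinAt2_nonpos (convex_Icc 0 1)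
    (fun x _ => ((hd1 x).continuousAt).continuousWithinAt)
    (fun x _ => (hd1 x).hasDerivWithinAt) (fun x _ => (hd2 x).hasDerivWithinAt) ?_
  intro x hx
  rw [interior_Icc] at hx
  have hS : ∑ i ∈ Finset.range (m+1),
      ((a (i+2) - a (i+1)) - (a (i+1) - a i)) * (m.choose i : ℝ) * x ^ i * (1 - x) ^ (m-i)
      ≤ 0 := by
    refine Finset.sum_nonpos fun i hi => ?_
    have hi0 : i < m + 1 := Finset.mem_range.mp hi
    have hcc' := hcc (i+1) (by omega) (by omega)
    simp only [Nat.add_sub_cancel] at hcc'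
    have h1 : (a (i+2) - a (i+1)) - (a (i+1) - a i) ≤ 0 := by
      have : i + 1 + 1 = i + 2 := by omega
      rw [this] at hcc'; linarith
    have h2 : (0:ℝ) ≤ (m.choose i : ℝ) * x ^ i * (1 - x) ^ (m-i) := by
      have hx1 : (0:ℝ) ≤ x := hx.1.le
      have hx2 : (0:ℝ) ≤ 1 - x := by linarith [hx.2]
      positivity
    calc ((a (i+2) - a (i+1)) - (a (i+1) - a i)) * (m.choose i : ℝ) * x ^ i * (1 - x) ^ (m-i)
        = ((a (i+2) - a (i+1)) - (a (i+1) - a i)) * ((m.choose i : ℝ) * x ^ i * (1 - x) ^ (m-i))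
          := by ring
      _ ≤ 0 := mul_nonpos_iff.mpr (Or.inr ⟨h1, h2⟩)
  have hpos : (0:ℝ) ≤ (((m:ℝ)+1)+1) * (((m:ℝ)+1)) := by positivity
  have : f'' x = ((((m:ℝ)+1)+1) * ((m:ℝ)+1)) * ∑ i ∈ Finset.range (m+1),
      ((a (i+2) - a (i+1)) - (a (i+1) - a i)) * (m.choose i : ℝ) * x ^ i * (1 - x) ^ (m-i) := by
    rw [hf'']; push_cast; ring
  rw [this]
  exact mul_nonpos_iff.mpr (Or.inl ⟨by linarith, hS⟩)
end
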